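/- Fix β₁ < 0 and let c₁ = e^{β₁}/(1+e^{β₁}) and c₂ = 1 + 1/(2β₁). Suppose c₁ < c₂. For β₂ > 0 define g(v) = β₁·v^{1/3} + β₂·v - I(v^{1/3}) for v ∈ (0,1), where I(u) = (1/2)u log u + (1/2)(1-u) log(1-u). If v ∈ (0,1) satisfies g''(v) ≤ 0, then v^{1/3} ≤ c₁ or v^{1/3} ≥ c₂. -/

import Mathlib

set_option maxHeartbeats 1000000


noncomputable def Ient (u : ℝ) : ℝ :=
  (1 / 2) * u * Real.log u + (1 / 2) * (1 - u) * Real.log (1 - u)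

noncomputable def Gfun (β₁ β₂ : ℝ) (x : ℝ) : ℝ :=
  β₁ * x ^ ((1 : ℝ) / 3) + β₂ * x - Ient (x ^ ((1 : ℝ) / 3))

noncomputable def D1 (β₁ β₂ : ℝ) (x : ℝ) : ℝ :=
  β₁ * ((1 : ℝ) / 3 * x ^ ((1 : ℝ) / 3 - 1)) + β₂
    - ((1 : ℝ) / 3 * x ^ ((1 : ℝ) / 3 - 1) / 2) *
      (Real.log (x ^ ((1 : ℝ) / 3)) - Real.log (1 - x ^ ((1 : ℝ) / 3)))

lemma u_pos {x : ℝ} (hx : x ∈ Set.Ioo (0 : ℝ) 1) : 0 < x ^ ((1 : ℝ) / 3) :=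
  Real.rpow_pos_of_pos hx.1 _

lemma u_lt_one {x : ℝ} (hx : x ∈ Set.Ioo (0 : ℝ) 1) : x ^ ((1 : ℝ) / 3) < 1 :=
  Real.rpow_lt_one hx.1.le hx.2 (by norm_num)

lemma hasDerivAt_G (β₁ β₂ : ℝ) {x : ℝ} (hx : x ∈ Set.Ioo (0 : ℝ) 1) :
    HasDerivAt (Gfun β₁ β₂) (D1 β₁ β₂ x) x := by
  have hx0 : (0 : ℝ) < x := hx.1
  set u : ℝ := x ^ ((1 : ℝ) / 3) with hu_def
  have hu0 : 0 < u := u_pos hx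
  have hu1 : u < 1 := u_lt_one hx
  have hw0 : 0 < 1 - u := by linarith
  set d : ℝ := (1 : ℝ) / 3 * x ^ ((1 : ℝ) / 3 - 1) with hd_def
  have hU : HasDerivAt (fun y : ℝ => y ^ ((1 : ℝ) / 3)) d x := by
    simpa [hd_def] using Real.hasDerivAt_rpow_const (x := x) (p := (1 : ℝ) / 3) (Or.inl hx0.ne')
  have hlogu : HasDerivAt (fun y : ℝ => Real.log (y ^ ((1 : ℝ) / 3))) (d / u) x :=
    hU.log hu0.ne'
  have h1mu : HasDerivAt (fun y : ℝ => 1 - y ^ ((1 : ℝ) / 3)) (-d) x := by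
    simpa using hU.const_sub (1 : ℝ)
  have hlog1mu : HasDerivAt (fun y : ℝ => Real.log (1 - y ^ ((1 : ℝ) / 3))) (-d / (1 - u)) x :=
    h1mu.log hw0.ne'
  have hA : HasDerivAt (fun y : ℝ => (1 : ℝ) / 2 * y ^ ((1 : ℝ) / 3) * Real.log (y ^ ((1 : ℝ) / 3)))
      ((1 : ℝ) / 2 * d * Real.log u + (1 : ℝ) / 2 * u * (d / u)) x :=
    (hU.const_mul ((1 : ℝ) / 2)).mul hlogu
  have hB : HasDerivAt
      (fun y : ℝ => (1 : ℝ) / 2 * (1 - y ^ ((1 : ℝ) / 3)) * Real.log (1 - y ^ ((1 : ℝ) / 3)))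
      ((1 : ℝ) / 2 * (-d) * Real.log (1 - u) + (1 : ℝ) / 2 * (1 - u) * (-d / (1 - u))) x :=
    (h1mu.const_mul ((1 : ℝ) / 2)).mul hlog1mu
  have hlin : HasDerivAt (fun y : ℝ => β₁ * y ^ ((1 : ℝ) / 3) + β₂ * y) (β₁ * d + β₂ * 1) x :=
    (hU.const_mul β₁).add ((hasDerivAt_id x).const_mul β₂)
  have hG := hlin.sub (hA.add hB)
  have : (fun y : ℝ => β₁ * y ^ ((1 : ℝ) / 3) + β₂ * y -
      ((1 : ℝ) / 2 * y ^ ((1 : ℝ) / 3) * Real.log (y ^ ((1 : ℝ) / 3)) +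
        (1 : ℝ) / 2 * (1 - y ^ ((1 : ℝ) / 3)) * Real.log (1 - y ^ ((1 : ℝ) / 3)))) =
      Gfun β₁ β₂ := by
    funext y; simp [Gfun, Ient]
  replace hG : HasDerivAt (Gfun β₁ β₂) _ x := hG
  convert hG using 1
  have hval : (1 : ℝ) / 2 * u * (d / u) = d / 2 := by
    field_simp
  have hval2 : (1 : ℝ) / 2 * (1 - u) * (-d / (1 - u)) = -d / 2 := by
    field_simp
  simp only [D1, ← hu_def, ← hd_def]
  rw [hval, hval2]
  ring

lemma hasDerivAt_D1 (β₁ β₂ : ℝ) {x : ℝ} (hx : x ∈ Set.Ioo (0 : ℝ) 1) :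
    HasDerivAt (D1 β₁ β₂)
      (β₁ * ((1 : ℝ) / 3 * (((1 : ℝ) / 3 - 1) * x ^ ((1 : ℝ) / 3 - 1 - 1)))
        - (((1 : ℝ) / 3 * (((1 : ℝ) / 3 - 1) * x ^ ((1 : ℝ) / 3 - 1 - 1))) / 2 *
            (Real.log (x ^ ((1 : ℝ) / 3)) - Real.log (1 - x ^ ((1 : ℝ) / 3)))
          + ((1 : ℝ) / 3 * x ^ ((1 : ℝ) / 3 - 1) / 2) *
            (((1 : ℝ) / 3 * x ^ ((1 : ℝ) / 3 - 1)) / (x ^ ((1 : ℝ) / 3))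
              - (-((1 : ℝ) / 3 * x ^ ((1 : ℝ) / 3 - 1)) / (1 - x ^ ((1 : ℝ) / 3)))))) x := by
  have hx0 : (0 : ℝ) < x := hx.1
  have hu0 : 0 < x ^ ((1 : ℝ) / 3) := u_pos hx
  have hu1 : x ^ ((1 : ℝ) / 3) < 1 := u_lt_one hx
  have hw0 : 0 < 1 - x ^ ((1 : ℝ) / 3) := by linarith
  have hU : HasDerivAt (fun y : ℝ => y ^ ((1 : ℝ) / 3)) ((1 : ℝ) / 3 * x ^ ((1 : ℝ) / 3 - 1)) x := by
    simpa using Real.hasDerivAt_rpow_const (x := x) (p := (1 : ℝ) / 3) (Or.inl hx0.ne')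
  have hP : HasDerivAt (fun y : ℝ => (1 : ℝ) / 3 * y ^ ((1 : ℝ) / 3 - 1))
      ((1 : ℝ) / 3 * (((1 : ℝ) / 3 - 1) * x ^ ((1 : ℝ) / 3 - 1 - 1))) x :=
    (Real.hasDerivAt_rpow_const (x := x) (p := (1 : ℝ) / 3 - 1) (Or.inl hx0.ne')).const_mul _
  have hlogu : HasDerivAt (fun y : ℝ => Real.log (y ^ ((1 : ℝ) / 3)))
      (((1 : ℝ) / 3 * x ^ ((1 : ℝ) / 3 - 1)) / (x ^ ((1 : ℝ) / 3))) x := hU.log hu0.ne'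
  have h1mu : HasDerivAt (fun y : ℝ => 1 - y ^ ((1 : ℝ) / 3))
      (-((1 : ℝ) / 3 * x ^ ((1 : ℝ) / 3 - 1))) x := by
    simpa using hU.const_sub (1 : ℝ)
  have hlog1mu : HasDerivAt (fun y : ℝ => Real.log (1 - y ^ ((1 : ℝ) / 3)))
      (-((1 : ℝ) / 3 * x ^ ((1 : ℝ) / 3 - 1)) / (1 - x ^ ((1 : ℝ) / 3))) x :=
    h1mu.log hw0.ne'
  have h2 := ((hP.const_mul β₁).add (hasDerivAt_const x β₂)).sub
    ((hP.div_const 2).mul (hlogu.sub hlog1mu))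
  replace h2 : HasDerivAt (D1 β₁ β₂) _ x := h2
  convert h2 using 1
  simp only [Pi.sub_apply]
  ring

theorem second_deriv_dichotomy (β₁ β₂ : ℝ) (hβ₁ : β₁ < 0) (hβ₂ : 0 < β₂)
    (c₁ c₂ : ℝ) (hc₁ : c₁ = Real.exp β₁ / (1 + Real.exp β₁)) (hc₂ : c₂ = 1 + 1 / (2 * β₁))
    (hcc : c₁ < c₂)
    (g : ℝ → ℝ)
    (hg : ∀ v ∈ Set.Ioo (0 : ℝ) 1,
      g v = β₁ * v ^ ((1 : ℝ) / 3) + β₂ * v - Ient (v ^ ((1 : ℝ) / 3)))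
    (v : ℝ) (hv : v ∈ Set.Ioo (0 : ℝ) 1)
    (hg'' : deriv (deriv g) v ≤ 0) :
    v ^ ((1 : ℝ) / 3) ≤ c₁ ∨ c₂ ≤ v ^ ((1 : ℝ) / 3) := by
  have hv0 : (0 : ℝ) < v := hv.1
  have hu0 : 0 < v ^ ((1 : ℝ) / 3) := u_pos hv
  have hu1 : v ^ ((1 : ℝ) / 3) < 1 := u_lt_one hv
  -- replace deriv g by D1 near v
  have hderiv_eq : ∀ x ∈ Set.Ioo (0 : ℝ) 1, deriv g x = D1 β₁ β₂ x := by
    intro x hx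
    have hEq : g =ᶠ[nhds x] Gfun β₁ β₂ :=
      Filter.eventuallyEq_of_mem (isOpen_Ioo.mem_nhds hx)
        (fun y hy => by simpa [Gfun] using hg y hy)
    rw [hEq.deriv_eq]
    exact (hasDerivAt_G β₁ β₂ hx).deriv
  have h2 : deriv g =ᶠ[nhds v] D1 β₁ β₂ :=
    Filter.eventuallyEq_of_mem (isOpen_Ioo.mem_nhds hv) hderiv_eq
  rw [h2.deriv_eq, (hasDerivAt_D1 β₁ β₂ hv).deriv] at hg''
  -- abbreviations
  set u : ℝ := v ^ ((1 : ℝ) / 3) with hu_def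
  set w : ℝ := 1 - u with hw_def
  have hw0 : 0 < w := by simp [hw_def]; linarith
  set L : ℝ := Real.log u - Real.log w with hL_def
  -- rpow identities
  have hA : v ^ ((1 : ℝ) / 3 - 1) = u / v := by
    rw [Real.rpow_sub hv0, Real.rpow_one]
  have hB : v ^ ((1 : ℝ) / 3 - 1 - 1) = u / v ^ 2 := by
    rw [Real.rpow_sub hv0, Real.rpow_sub hv0, Real.rpow_one]
    rw [div_div, sq]
  rw [hA, hB] at hg''
  -- clean inequality: (u / v^2) * ((-2*β₁ + L - 1/(2*w))/9) ≤ 0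
  have hkey0 : (u / v ^ 2) * ((-2 * β₁ + L - 1 / (2 * w)) / 9) ≤ 0 := by
    have heq : (u / v ^ 2) * ((-2 * β₁ + L - 1 / (2 * w)) / 9) =
        β₁ * ((1 : ℝ) / 3 * (((1 : ℝ) / 3 - 1) * (u / v ^ 2)))
        - (((1 : ℝ) / 3 * (((1 : ℝ) / 3 - 1) * (u / v ^ 2))) / 2 * (Real.log u - Real.log w)
          + ((1 : ℝ) / 3 * (u / v) / 2) *
            (((1 : ℝ) / 3 * (u / v)) / u - (-((1 : ℝ) / 3 * (u / v)) / w))) := by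
      have hveq : v = u ^ 3 := by
        rw [hu_def, ← Real.rpow_natCast (v ^ ((1:ℝ)/3)) 3, ← Real.rpow_mul hv0.le]
        norm_num
      rw [hL_def, hveq]
      field_simp
      ring
    rw [heq]
    convert hg'' using 3 <;> simp [hw_def]
  have hpos : 0 < u / v ^ 2 := by positivity
  have hkey : -2 * β₁ + L - 1 / (2 * w) ≤ 0 := by
    by_contra h
    push_neg at h
    nlinarith [mul_pos hpos (show (0:ℝ) < (-2 * β₁ + L - 1 / (2 * w)) / 9 by linarith)]
  -- dichotomy
  by_contra hcon
  push_neg at hcon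
  obtain ⟨h1, h2'⟩ := hcon
  -- h1 : c₁ < u, h2' : u < c₂
  have hE : 0 < Real.exp β₁ := Real.exp_pos β₁
  have hL_gt : β₁ < L := by
    have huw : Real.exp β₁ < u / w := by
      rw [hc₁] at h1
      rw [lt_div_iff₀ hw0]
      have h1e : 0 < 1 + Real.exp β₁ := by linarith
      rw [div_lt_iff₀ h1e] at h1
      nlinarith
    have := Real.log_lt_log hE huw
    rwa [Real.log_exp, Real.log_div hu0.ne' hw0.ne', ← hL_def] at this
  have hw_gt : β₁ < -1 / (2 * w) := by
    have hwgt : -(1 / (2 * β₁)) < w := by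
      rw [hc₂] at h2'; rw [hw_def]; linarith
    have hmul : 2 * β₁ * w < -1 := by
      have h0 : 2 * β₁ * -(1 / (2 * β₁)) = -1 := by
        have hne : 2 * β₁ ≠ 0 := by linarith
        field_simp
        rw [div_self (by linarith : β₁ ≠ 0)]
      have := mul_lt_mul_of_neg_left hwgt (show 2 * β₁ < 0 by linarith)
      rw [h0] at this
      linarith
    rw [lt_div_iff₀ (by linarith : (0:ℝ) < 2 * w)]
    nlinarith [hmul]
  have h1w : -1 / (2 * w) = -(1 / (2 * w)) := by ring
  rw [h1w] at hw_gt
  linarith
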